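/- For any real numbers a ≥ b ≥ 0, any β < 0 and any H > 0 with a, b ≤ H, one has (a − b)/Φ_H(β) ≤ H·(e^{βb} − e^{βa})/(1 − e^{βH}), where Φ_H(β) = (e^{|β|H} − 1)/(|β|H). -/
import Mathlib


theorem normalized_gap_bound_neg (a b β H : ℝ)
    (hab : a ≥ b) (hb : b ≥ 0) (hβ : β < 0) (hH : 0 < H) (ha : a ≤ H) (hbH : b ≤ H) :
    (a - b) / ((Real.exp (|β| * H) - 1) / (|β| * H)) ≤
      H * (Real.exp (β * b) - Real.exp (β * a)) / (1 - Real.exp (β * H)) := by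
  rw [abs_of_neg hβ]
  have hβH : β * H < 0 := mul_neg_of_neg_of_pos hβ hH
  have h1 : Real.exp (β * H) < 1 := Real.exp_lt_one_iff.2 hβH
  have hmul : Real.exp (-β * H) * Real.exp (β * H) = 1 := by
    rw [← Real.exp_add]; ring_nf; exact Real.exp_zero
  have heH0 : (0:ℝ) < Real.exp (β * H) := Real.exp_pos _
  have h2 : (1:ℝ) < Real.exp (-β * H) := by nlinarith
  have hposH : 0 < -β * H := by nlinarith
  have h3 : β * a ≤ β * b := by nlinarith
  have h4 := Real.add_one_le_exp (β * b - β * a)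
  have h5 : Real.exp (β * b) = Real.exp (β * a) * Real.exp (β * b - β * a) := by
    rw [← Real.exp_add]; ring_nf
  have h6 : Real.exp (β * H) ≤ Real.exp (β * a) := Real.exp_le_exp.2 (by nlinarith)
  have hea : 0 < Real.exp (β * a) := Real.exp_pos _
  have heH : 0 < Real.exp (β * H) := Real.exp_pos _
  have key : (-β) * (a - b) * Real.exp (β * H) ≤ Real.exp (β * b) - Real.exp (β * a) := by
    have : Real.exp (β * b) - Real.exp (β * a) ≥ (β * b - β * a) * Real.exp (β * a) := by
      nlinarith
    nlinarith
  rw [div_div_eq_mul_div, div_le_div_iff₀ (by nlinarith) (by nlinarith)]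
  have hrel : 1 - Real.exp (β * H) = Real.exp (β * H) * (Real.exp (-β * H) - 1) := by
    nlinarith [hmul]
  have key2 := mul_le_mul_of_nonneg_right (mul_le_mul_of_nonneg_left key hH.le)
    (sub_nonneg.2 h2.le)
  rw [hrel]
  nlinarith [key2]
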